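/- Let d ≥ 1 and let ρ be a symmetric non-degenerate probability measure on ℝ^d (ρ(H) < 1 for every affine hyperplane H). Then for every x ∈ ℝ^d with x ≠ 0 and every d×d symmetric positive definite matrix M, one has I(x, M) > ⟨M⁻¹x, x⟩ / 2. -/

import Mathlib

open MeasureTheory Filter Matrix Real

noncomputable section

/-- `T_n(x) = ∑ i, x_i ᵗx_i`. -/
def Tmat (d n : ℕ) (x : Fin n → Fin d → ℝ) : Matrix (Fin d) (Fin d) ℝ :=
  ∑ i, Matrix.vecMulVec (x i) (x i)

/-- `S_n(x) = x_1 + … + x_n`. -/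
def Svec (d n : ℕ) (x : Fin n → Fin d → ℝ) : Fin d → ℝ := ∑ i, x i

/-- the Hamiltonian `(1/2)⟨T_n⁻¹ S_n, S_n⟩`. -/
def Hfun (d n : ℕ) (x : Fin n → Fin d → ℝ) : ℝ :=
  (1 / 2) * dotProduct ((Tmat d n x)⁻¹.mulVec (Svec d n x)) (Svec d n x)

/-- normalization constant `Z_n`. -/
def Zconst (d : ℕ) (ρ : Measure (Fin d → ℝ)) (n : ℕ) : ℝ :=
  ∫ x : Fin n → Fin d → ℝ,
    Set.indicator {x | 0 < (Tmat d n x).det} (fun x => Real.exp (Hfun d n x)) x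
    ∂ Measure.pi fun _ => ρ

/-- the Curie-Weiss model of SOC `μ̃_{n,ρ}`. -/
def CW (d : ℕ) (ρ : Measure (Fin d → ℝ)) (n : ℕ) : Measure (Fin n → Fin d → ℝ) :=
  (Measure.pi fun _ => ρ).withDensity fun x =>
    Set.indicator {x | 0 < (Tmat d n x).det}
      (fun x => ENNReal.ofReal (Real.exp (Hfun d n x) / Zconst d ρ n)) x

/-- covariance matrix `Σ = ∫ z ᵗz dρ(z)`. -/
def covM (d : ℕ) (ρ : Measure (Fin d → ℝ)) : Matrix (Fin d) (Fin d) ℝ :=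
  Matrix.of fun i j => ∫ z, z i * z j ∂ρ

/-- `M₄(z) = ∑ (∫ yᵢyⱼyₖyₗ dρ) zᵢzⱼzₖzₗ`. -/
def M4 (d : ℕ) (ρ : Measure (Fin d → ℝ)) (z : Fin d → ℝ) : ℝ :=
  ∑ i : Fin d, ∑ j : Fin d, ∑ k : Fin d, ∑ l : Fin d,
    (∫ y, y i * y j * y k * y l ∂ρ) * (z i * z j * z k * z l)

/-- symmetric measure: invariant under `z ↦ -z`. -/
def SymMeas (d : ℕ) (ρ : Measure (Fin d → ℝ)) : Prop := ρ.map (fun z => -z) = ρ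

/-- condition `(*)` : some Gaussian exponential moment. -/
def CondStar (d : ℕ) (ρ : Measure (Fin d → ℝ)) : Prop :=
  ∃ v₀ > (0:ℝ), Integrable (fun z => Real.exp (v₀ * dotProduct z z)) ρ

/-- the ρ-measure of every vector hyperplane is `< 1/√e`. -/
def HypLt (d : ℕ) (ρ : Measure (Fin d → ℝ)) : Prop :=
  ∀ s : Fin d → ℝ, s ≠ 0 →
    ρ {z | dotProduct s z = 0} < ENNReal.ofReal (1 / Real.sqrt (Real.exp 1))

/-- non-degeneracy: the ρ-measure of every affine hyperplane is `< 1`. -/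
def NonDeg (d : ℕ) (ρ : Measure (Fin d → ℝ)) : Prop :=
  ∀ s : Fin d → ℝ, s ≠ 0 → ∀ c : ℝ, ρ {z | dotProduct s z = c} < 1

-- positive square root of a positive semi-definite matrix (junk value otherwise).
open scoped Classical in
def psqrt (d : ℕ) (M : Matrix (Fin d) (Fin d) ℝ) : Matrix (Fin d) (Fin d) ℝ :=
  if h : M.PosSemidef then
    (h.1.eigenvectorUnitary : Matrix (Fin d) (Fin d) ℝ) *
      diagonal ((↑) ∘ (Real.sqrt ·) ∘ h.1.eigenvalues) *
      (star (h.1.eigenvectorUnitary : Matrix (Fin d) (Fin d) ℝ))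
  else 0

/-- Euclidean norm on `ℝ^d`. -/
def vnorm (d : ℕ) (v : Fin d → ℝ) : ℝ := Real.sqrt (dotProduct v v)

/-- Frobenius norm on `d × d` matrices. -/
def mnorm (d : ℕ) (M : Matrix (Fin d) (Fin d) ℝ) : ℝ :=
  Real.sqrt (∑ i : Fin d, ∑ j : Fin d, (M i j) ^ 2)

/-- the log-Laplace transform `Λ` of `(Z, Z ᵗZ)`, with values in `(-∞, +∞]`. -/
def Lam (d : ℕ) (ρ : Measure (Fin d → ℝ)) (u : Fin d → ℝ)
    (A : Matrix (Fin d) (Fin d) ℝ) : EReal :=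
  ENNReal.log (∫⁻ z, ENNReal.ofReal
    (Real.exp (dotProduct u z + dotProduct (A.mulVec z) z)) ∂ρ)

/-- the Cramér transform `I` of `(Z, Z ᵗZ)`. -/
def CramerI (d : ℕ) (ρ : Measure (Fin d → ℝ)) (x : Fin d → ℝ)
    (M : Matrix (Fin d) (Fin d) ℝ) : EReal :=
  ⨆ p : (Fin d → ℝ) × {A : Matrix (Fin d) (Fin d) ℝ // A.IsSymm},
    ((dotProduct x p.1 + (M * (p.2 : Matrix (Fin d) (Fin d) ℝ)).trace : ℝ) : EReal)
      - Lam d ρ p.1 p.2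

end

open NormedSpace in
lemma aux_cosh_lt_exp_half_sq {x : ℝ} (hx : x ≠ 0) : Real.cosh x < Real.exp (x ^ 2 / 2) := by
  rw [Real.cosh_eq_tsum, Real.exp_eq_exp_ℝ, exp_eq_tsum ℝ]
  have hsum := expSeries_summable' (𝕂 := ℝ) (x ^ 2 / 2)
  refine Summable.tsum_lt_tsum_of_nonneg (i := 2) (fun n => ?_) (fun n => ?_) ?_ hsum
  · rw [pow_mul]; positivity
  · simp only [div_pow, pow_mul, smul_eq_mul, inv_mul_eq_div, div_div]
    gcongr
    norm_cast
    exact Nat.two_pow_mul_factorial_le_factorial_two_mul _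
  · simp only [div_pow, pow_mul, smul_eq_mul, inv_mul_eq_div, div_div]
    rw [div_lt_div_iff₀ (by positivity) (by positivity)]
    have : (0:ℝ) < (x ^ 2) ^ 2 := by positivity
    norm_num [Nat.factorial]
    nlinarith

lemma aux_phi_le {t : ℝ} :
    Real.exp (t - t^2/2) + Real.exp (-t - t^2/2) ≤ 2 ∧
    (t ≠ 0 → Real.exp (t - t^2/2) + Real.exp (-t - t^2/2) < 2) := by
  have h1 : Real.exp (t - t^2/2) + Real.exp (-t - t^2/2)
      = 2 * Real.cosh t * Real.exp (-(t^2/2)) := by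
    rw [Real.cosh_eq]
    rw [show t - t^2/2 = t + -(t^2/2) by ring, show -t - t^2/2 = -t + -(t^2/2) by ring,
      Real.exp_add, Real.exp_add]
    ring
  have h2 : Real.exp (t^2/2) * Real.exp (-(t^2/2)) = 1 := by
    rw [← Real.exp_add]; simp
  have hpos := Real.exp_pos (-(t^2/2))
  constructor
  · rw [h1]
    have := Real.cosh_le_exp_half_sq t
    nlinarith
  · intro ht
    rw [h1]
    have := aux_cosh_lt_exp_half_sq ht
    nlinarith

lemma aux_lt_sub {r : ℝ} {e : EReal} (he : e < 0) : (r : EReal) < (r : EReal) - e := by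
  induction e using EReal.rec with
  | bot => rw [EReal.coe_sub_bot]; exact EReal.coe_lt_top r
  | coe t =>
      have ht : t < 0 := by exact_mod_cast he
      rw [← EReal.coe_sub]
      exact_mod_cast (by linarith : r < r - t)
  | top => exact absurd he (by simp)

/-- for `x ≠ 0` and `M` positive definite, `I(x,M) > ⟨M⁻¹x,x⟩/2`. -/
theorem cramerI_gt
    (d : ℕ) (hd : 1 ≤ d) (ρ : Measure (Fin d → ℝ)) [IsProbabilityMeasure ρ]
    (hsym : SymMeas d ρ) (hnd : NonDeg d ρ)
    (x : Fin d → ℝ) (hx : x ≠ 0) (M : Matrix (Fin d) (Fin d) ℝ) (hM : M.PosDef) :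
    ((dotProduct (M⁻¹.mulVec x) x / 2 : ℝ) : EReal) < CramerI d ρ x M := by
  classical
  set u : Fin d → ℝ := M⁻¹.mulVec x with hu_def
  set A : Matrix (Fin d) (Fin d) ℝ := (-(1/2):ℝ) • Matrix.vecMulVec u u with hA_def
  have hMu : M.mulVec u = x := by
    rw [hu_def, Matrix.mulVec_mulVec, Matrix.mul_nonsing_inv _ hM.det_pos.ne'.isUnit,
      Matrix.one_mulVec]
  have hu0 : u ≠ 0 := by
    intro h0
    apply hx
    rw [← hMu, h0, Matrix.mulVec_zero]
  have hA : A.IsSymm := by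
    ext i j
    simp [hA_def, Matrix.vecMulVec_apply, Matrix.transpose_apply, mul_comm]
  set q : ℝ := dotProduct (M⁻¹.mulVec x) x with hq_def
  -- trace computation
  have htr : (M * A).trace = -(q/2) := by
    have : (M * A).trace = -(1/2) * dotProduct (M.mulVec u) u := by
      simp [hA_def, Matrix.trace, Matrix.diag, Matrix.mul_apply, Matrix.vecMulVec_apply,
        Matrix.mulVec, dotProduct, Finset.mul_sum, Finset.sum_mul, mul_assoc]
      congr 1; ext i; congr 1; ext j; ring
    rw [this, hMu]
    rw [hq_def, dotProduct_comm]
    ring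
  have hxu : dotProduct x u = q := by
    rw [dotProduct_comm, hq_def]
  -- quadratic form computation
  have hquad : ∀ z : Fin d → ℝ, dotProduct (A.mulVec z) z
      = -(1/2) * (dotProduct u z)^2 := by
    intro z
    have h : (Matrix.vecMulVec u u).mulVec z = (dotProduct u z) • u := by
      ext i
      simp only [Matrix.mulVec, Matrix.vecMulVec_apply, dotProduct, Pi.smul_apply,
        smul_eq_mul, Finset.sum_mul, Finset.mul_sum]
      exact Finset.sum_congr rfl fun j _ => by ring
    rw [hA_def, Matrix.smul_mulVec, h]
    simp [dotProduct, Finset.mul_sum, Finset.sum_mul, pow_two]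
    refine Finset.sum_congr rfl fun i _ => Finset.sum_congr rfl fun j _ => by ring
  -- measurability
  have ha : Measurable fun z : Fin d → ℝ => dotProduct u z := by
    unfold dotProduct
    exact Finset.measurable_sum _ fun i _ => (measurable_pi_apply i).const_mul _
  set f : (Fin d → ℝ) → ENNReal := fun z => ENNReal.ofReal
    (Real.exp (dotProduct u z + dotProduct (A.mulVec z) z)) with hf_def
  have hexp : ∀ z, dotProduct u z + dotProduct (A.mulVec z) z
      = dotProduct u z - (dotProduct u z)^2/2 := by
    intro z; rw [hquad z]; ring
  have hf : Measurable f := by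
    apply ENNReal.measurable_ofReal.comp
    apply Real.measurable_exp.comp
    have : (fun z : Fin d → ℝ => dotProduct u z + dotProduct (A.mulVec z) z)
        = fun z => dotProduct u z - (dotProduct u z)^2/2 := funext hexp
    rw [this]
    exact ha.sub ((ha.pow_const 2).div_const 2)
  set L : ENNReal := ∫⁻ z, f z ∂ρ with hL_def
  -- symmetry
  have hmap : ∫⁻ z, f (-z) ∂ρ = L := by
    have hsym' : ρ.map (fun z : Fin d → ℝ => -z) = ρ := hsym
    rw [hL_def]
    conv_rhs => rw [← hsym']
    rw [lintegral_map hf measurable_neg]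
  -- the symmetrized integrand
  set g : (Fin d → ℝ) → ℝ := fun z =>
    Real.exp (dotProduct u z - (dotProduct u z)^2/2)
      + Real.exp (-(dotProduct u z) - (dotProduct u z)^2/2) with hg_def
  have hfsum : ∀ z, f z + f (-z) = ENNReal.ofReal (g z) := by
    intro z
    rw [hf_def]
    simp only
    rw [hexp z, hexp (-z), dotProduct_neg]
    rw [← ENNReal.ofReal_add (Real.exp_nonneg _) (Real.exp_nonneg _)]
    congr 1
    rw [hg_def]
    simp only
    ring_nf
  have hg_meas : Measurable fun z => ENNReal.ofReal (g z) := by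
    apply ENNReal.measurable_ofReal.comp
    exact (Real.measurable_exp.comp (ha.sub ((ha.pow_const 2).div_const 2))).add
      (Real.measurable_exp.comp ((ha.neg).sub ((ha.pow_const 2).div_const 2)))
  set r : (Fin d → ℝ) → ℝ := fun z => 2 - g z with hr_def
  have hg_le : ∀ z, g z ≤ 2 := fun z => (aux_phi_le).1
  have hg_lt : ∀ z, dotProduct u z ≠ 0 → g z < 2 := fun z hz => (aux_phi_le).2 hz
  have hg_nonneg : ∀ z, 0 ≤ g z := fun z => by
    rw [hg_def]; positivity
  have hsplit : ∀ z, ENNReal.ofReal (g z) + ENNReal.ofReal (r z) = 2 := by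
    intro z
    rw [← ENNReal.ofReal_add (hg_nonneg z) (by rw [hr_def]; simp only; linarith [hg_le z])]
    rw [hr_def]
    norm_num
  have hr_meas : Measurable fun z => ENNReal.ofReal (r z) := by
    apply ENNReal.measurable_ofReal.comp
    exact (measurable_const.sub ((Real.measurable_exp.comp
      (ha.sub ((ha.pow_const 2).div_const 2))).add
      (Real.measurable_exp.comp ((ha.neg).sub ((ha.pow_const 2).div_const 2)))))
  have hsum_int : (∫⁻ z, ENNReal.ofReal (g z) ∂ρ) + (∫⁻ z, ENNReal.ofReal (r z) ∂ρ) = 2 := by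
    rw [← lintegral_add_left hg_meas]
    simp_rw [hsplit]
    simp [lintegral_const]
  -- positivity of the remainder integral
  have hP_pos : 0 < ∫⁻ z, ENNReal.ofReal (r z) ∂ρ := by
    rw [lintegral_pos_iff_support hr_meas]
    have hs_meas : MeasurableSet {z : Fin d → ℝ | dotProduct u z = 0} :=
      ha (measurableSet_singleton 0)
    have h1 : ρ {z | dotProduct u z = 0} < 1 := hnd u hu0 0
    have h2 : 0 < ρ {z : Fin d → ℝ | dotProduct u z = 0}ᶜ := by
      rw [prob_compl_eq_one_sub hs_meas]
      exact tsub_pos_iff_lt.mpr h1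
    refine lt_of_lt_of_le h2 (measure_mono ?_)
    intro z hz
    simp only [Set.mem_compl_iff, Set.mem_setOf_eq] at hz
    simp only [Function.mem_support, ne_eq, ENNReal.ofReal_eq_zero, not_le]
    have := hg_lt z hz
    rw [hr_def]
    simp only
    linarith
  -- conclude L < 1
  have hGlt : (∫⁻ z, ENNReal.ofReal (g z) ∂ρ) < 2 := by
    have hle : (∫⁻ z, ENNReal.ofReal (g z) ∂ρ) ≤ 2 := by
      rw [← hsum_int]; exact le_self_add
    have hne : (∫⁻ z, ENNReal.ofReal (g z) ∂ρ) ≠ ⊤ :=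
      ne_top_of_le_ne_top (by norm_num) hle
    calc (∫⁻ z, ENNReal.ofReal (g z) ∂ρ)
        < (∫⁻ z, ENNReal.ofReal (g z) ∂ρ) + ∫⁻ z, ENNReal.ofReal (r z) ∂ρ :=
          ENNReal.lt_add_right hne hP_pos.ne'
      _ = 2 := hsum_int
  have hLL : L + L = ∫⁻ z, ENNReal.ofReal (g z) ∂ρ := by
    nth_rewrite 2 [← hmap]
    rw [hL_def, ← lintegral_add_left hf]
    exact lintegral_congr fun z => hfsum z
  have hL1 : L < 1 := by
    by_contra hcon
    push_neg at hcon
    have : (2 : ENNReal) ≤ L + L := by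
      calc (2:ENNReal) = 1 + 1 := by norm_num
        _ ≤ L + L := add_le_add hcon hcon
    rw [hLL] at this
    exact absurd hGlt (not_lt.mpr this)
  -- Lam < 0
  have hΛ : Lam d ρ u A < 0 := by
    have : Lam d ρ u A = ENNReal.log L := rfl
    rw [this, ← ENNReal.log_one]
    exact ENNReal.log_strictMono hL1
  -- final step
  have hterm : ((q/2 : ℝ) : EReal)
      < ((dotProduct x u + (M * A).trace : ℝ) : EReal) - Lam d ρ u A := by
    rw [hxu, htr]
    have heq : (q + -(q/2) : ℝ) = q/2 := by ring
    rw [heq]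
    exact aux_lt_sub hΛ
  calc ((dotProduct (M⁻¹.mulVec x) x / 2 : ℝ) : EReal)
      < ((dotProduct x u + (M * A).trace : ℝ) : EReal) - Lam d ρ u A := hterm
    _ ≤ CramerI d ρ x M := le_iSup (fun p : (Fin d → ℝ) × {A : Matrix (Fin d) (Fin d) ℝ // A.IsSymm} =>
        ((dotProduct x p.1 + (M * (p.2 : Matrix (Fin d) (Fin d) ℝ)).trace : ℝ) : EReal)
          - Lam d ρ p.1 p.2) ⟨u, ⟨A, hA⟩⟩
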